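/- Let K be any field, let T be the Toeplitz graph with two vertices v, w and two edges e, f where s(e) = r(e) = v, s(f) = v, r(f) = w, and let A = K⟨x, y | xy = 1⟩ be the Jacobson algebra. Then L_K(T) ≅ A as K-algebras, via an isomorphism sending v ↦ yx, w ↦ 1 - yx, e ↦ y²x, f ↦ y - y²x, e* ↦ yx², f* ↦ x - yx². -/

import Mathlib

/-- Generators of the Leavitt path algebra: vertices, edges, and ghost edges. -/
inductive LPAGen (V E : Type) : Type
  | vertex : V → LPAGen V E
  | edge : E → LPAGen V E
  | ghost : E → LPAGen V E

/-- The defining relations of the Leavitt path algebra of a finite graph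
(including the relation `∑ v = 1`, which presents the honest unital Leavitt path
algebra of a graph with finitely many vertices). -/
inductive LPARel (K : Type) [Field K] {V E : Type} [Fintype V] (s r : E → V) :
    FreeAlgebra K (LPAGen V E) → FreeAlgebra K (LPAGen V E) → Prop
  | vertex_self (v : V) :
      LPARel K s r (FreeAlgebra.ι K (LPAGen.vertex v) * FreeAlgebra.ι K (LPAGen.vertex v))
        (FreeAlgebra.ι K (LPAGen.vertex v))
  | vertex_ne {v w : V} (h : v ≠ w) :
      LPARel K s r (FreeAlgebra.ι K (LPAGen.vertex v) * FreeAlgebra.ι K (LPAGen.vertex w)) 0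
  | edge_left (e : E) :
      LPARel K s r (FreeAlgebra.ι K (LPAGen.vertex (s e)) * FreeAlgebra.ι K (LPAGen.edge e))
        (FreeAlgebra.ι K (LPAGen.edge e))
  | edge_right (e : E) :
      LPARel K s r (FreeAlgebra.ι K (LPAGen.edge e) * FreeAlgebra.ι K (LPAGen.vertex (r e)))
        (FreeAlgebra.ι K (LPAGen.edge e))
  | ghost_left (e : E) :
      LPARel K s r (FreeAlgebra.ι K (LPAGen.vertex (r e)) * FreeAlgebra.ι K (LPAGen.ghost e))
        (FreeAlgebra.ι K (LPAGen.ghost e))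
  | ghost_right (e : E) :
      LPARel K s r (FreeAlgebra.ι K (LPAGen.ghost e) * FreeAlgebra.ι K (LPAGen.vertex (s e)))
        (FreeAlgebra.ι K (LPAGen.ghost e))
  | ck1_self (e : E) :
      LPARel K s r (FreeAlgebra.ι K (LPAGen.ghost e) * FreeAlgebra.ι K (LPAGen.edge e))
        (FreeAlgebra.ι K (LPAGen.vertex (r e)))
  | ck1_ne {e f : E} (h : e ≠ f) :
      LPARel K s r (FreeAlgebra.ι K (LPAGen.ghost e) * FreeAlgebra.ι K (LPAGen.edge f)) 0
  | ck2 (v : V) (h : {e : E | s e = v}.Finite) (hne : {e : E | s e = v}.Nonempty) :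
      LPARel K s r (FreeAlgebra.ι K (LPAGen.vertex v))
        (h.toFinset.sum fun e => FreeAlgebra.ι K (LPAGen.edge e) * FreeAlgebra.ι K (LPAGen.ghost e))
  | unit :
      LPARel K s r (∑ v : V, FreeAlgebra.ι K (LPAGen.vertex v)) 1

/-- The Leavitt path algebra of a finite graph with coefficients in `K`. -/
abbrev LPA (K : Type) [Field K] {V E : Type} [Fintype V] (s r : E → V) : Type :=
  RingQuot (LPARel K s r)

variable (K : Type) [Field K] {V E : Type} [Fintype V] (s r : E → V)

/-- The canonical image of a generator in the Leavitt path algebra. -/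
def gen (g : LPAGen V E) : LPA K s r :=
  RingQuot.mkAlgHom K (LPARel K s r) (FreeAlgebra.ι K g)


def vertexEl (v : V) : LPA K s r := gen K s r (LPAGen.vertex v)
def edgeEl (e : E) : LPA K s r := gen K s r (LPAGen.edge e)
def ghostEl (e : E) : LPA K s r := gen K s r (LPAGen.ghost e)

/-- Vertices of the Toeplitz graph. -/
inductive TV : Type
  | v : TV
  | w : TV
  deriving DecidableEq

instance : Fintype TV :=
  ⟨{TV.v, TV.w}, fun x => by cases x <;> simp⟩

/-- Edges of the Toeplitz graph: a loop `e` at `v` and an edge `f` from `v` to `w`. -/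
inductive TE : Type
  | e : TE
  | f : TE
  deriving DecidableEq

instance : Fintype TE :=
  ⟨{TE.e, TE.f}, fun x => by cases x <;> simp⟩

/-- Source map of the Toeplitz graph. -/
def ts : TE → TV
  | TE.e => TV.v
  | TE.f => TV.v

/-- Range map of the Toeplitz graph. -/
def tr : TE → TV
  | TE.e => TV.v
  | TE.f => TV.w

/-- Generators of the Jacobson algebra `K⟨x, y | xy = 1⟩`. -/
inductive JGen : Type
  | x : JGen
  | y : JGen

/-- The defining relation `x y = 1` of the Jacobson algebra. -/
inductive JRel (K : Type) [Field K] : FreeAlgebra K JGen → FreeAlgebra K JGen → Prop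
  | xy : JRel K (FreeAlgebra.ι K JGen.x * FreeAlgebra.ι K JGen.y) 1

/-- The Jacobson algebra `A = K⟨x, y | xy = 1⟩`. -/
abbrev JacobsonAlgebra (K : Type) [Field K] : Type := RingQuot (JRel K)

/-- The generator `x` of the Jacobson algebra. -/
def jX (K : Type) [Field K] : JacobsonAlgebra K :=
  RingQuot.mkAlgHom K (JRel K) (FreeAlgebra.ι K JGen.x)

/-- The generator `y` of the Jacobson algebra. -/
def jY (K : Type) [Field K] : JacobsonAlgebra K :=
  RingQuot.mkAlgHom K (JRel K) (FreeAlgebra.ι K JGen.y)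

namespace ToeplitzAux

variable (K : Type) [Field K]

lemma red1 : jX K * jY K = 1 := by
  have h := RingQuot.mkAlgHom_rel (S := K) (s := JRel K) JRel.xy
  rw [map_mul, map_one] at h
  exact h

lemma red2 (t : JacobsonAlgebra K) : jX K * (jY K * t) = t := by
  rw [← mul_assoc, red1, one_mul]

/-- The map on free-algebra generators defining `φ`. -/
noncomputable def Fmap : FreeAlgebra K (LPAGen TV TE) →ₐ[K] JacobsonAlgebra K :=
  FreeAlgebra.lift K fun g => match g with
    | .vertex .v => jY K * jX K
    | .vertex .w => 1 - jY K * jX K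
    | .edge .e => jY K * jY K * jX K
    | .edge .f => jY K - jY K * jY K * jX K
    | .ghost .e => jY K * jX K * jX K
    | .ghost .f => jX K - jY K * jX K * jX K

@[simp] lemma Fmap_vv : Fmap K (FreeAlgebra.ι K (LPAGen.vertex TV.v)) = jY K * jX K := by
  simp [Fmap]
@[simp] lemma Fmap_vw : Fmap K (FreeAlgebra.ι K (LPAGen.vertex TV.w)) = 1 - jY K * jX K := by
  simp [Fmap]
@[simp] lemma Fmap_ee : Fmap K (FreeAlgebra.ι K (LPAGen.edge TE.e)) = jY K * jY K * jX K := by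
  simp [Fmap]
@[simp] lemma Fmap_ef :
    Fmap K (FreeAlgebra.ι K (LPAGen.edge TE.f)) = jY K - jY K * jY K * jX K := by
  simp [Fmap]
@[simp] lemma Fmap_ge : Fmap K (FreeAlgebra.ι K (LPAGen.ghost TE.e)) = jY K * jX K * jX K := by
  simp [Fmap]
@[simp] lemma Fmap_gf :
    Fmap K (FreeAlgebra.ι K (LPAGen.ghost TE.f)) = jX K - jY K * jX K * jX K := by
  simp [Fmap]

lemma Frel : ∀ ⦃a b⦄, LPARel K ts tr a b → Fmap K a = Fmap K b := by
  intro a b h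
  induction h with
  | vertex_self v =>
      cases v <;>
        simp only [map_mul, Fmap_vv, Fmap_vw, mul_sub, sub_mul, mul_one, one_mul,
          mul_assoc, red1, red2] <;> abel
  | @vertex_ne v w h =>
      cases v <;> cases w <;> first
        | exact absurd rfl h
        | (simp only [map_mul, map_zero, Fmap_vv, Fmap_vw, mul_sub, sub_mul, mul_one, one_mul,
            mul_assoc, red1, red2]; abel)
  | edge_left e =>
      cases e <;>
        simp only [map_mul, ts, Fmap_vv, Fmap_ee, Fmap_ef, mul_sub, sub_mul, mul_one, one_mul,
          mul_assoc, red1, red2] <;> abel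
  | edge_right e =>
      cases e <;>
        simp only [map_mul, tr, Fmap_vv, Fmap_vw, Fmap_ee, Fmap_ef, mul_sub, sub_mul, mul_one,
          one_mul, mul_assoc, red1, red2] <;> abel
  | ghost_left e =>
      cases e <;>
        simp only [map_mul, tr, Fmap_vv, Fmap_vw, Fmap_ge, Fmap_gf, mul_sub, sub_mul, mul_one,
          one_mul, mul_assoc, red1, red2] <;> abel
  | ghost_right e =>
      cases e <;>
        simp only [map_mul, ts, Fmap_vv, Fmap_ge, Fmap_gf, mul_sub, sub_mul, mul_one,
          one_mul, mul_assoc, red1, red2] <;> abel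
  | ck1_self e =>
      cases e <;>
        simp only [map_mul, tr, Fmap_vv, Fmap_vw, Fmap_ee, Fmap_ef, Fmap_ge, Fmap_gf, mul_sub,
          sub_mul, mul_one, one_mul, mul_assoc, red1, red2] <;> abel
  | @ck1_ne e f h =>
      cases e <;> cases f <;> first
        | exact absurd rfl h
        | (simp only [map_mul, map_zero, Fmap_ee, Fmap_ef, Fmap_ge, Fmap_gf, mul_sub, sub_mul,
            mul_one, one_mul, mul_assoc, red1, red2]; abel)
  | ck2 v h hne =>
      cases v with
      | w =>
          obtain ⟨a, ha⟩ := hne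
          cases a <;> simp [ts] at ha
      | v =>
          have hfs : h.toFinset = ({TE.e, TE.f} : Finset TE) := by
            ext a; cases a <;> simp [ts]
          rw [hfs, Finset.sum_pair (by decide : TE.e ≠ TE.f)]
          simp only [map_add, map_mul, Fmap_vv, Fmap_ee, Fmap_ef, Fmap_ge, Fmap_gf, mul_sub,
            sub_mul, mul_one, one_mul, mul_assoc, red1, red2]
          abel
  | unit =>
      have huniv : (Finset.univ : Finset TV) = ({TV.v, TV.w} : Finset TV) := by
        ext a; cases a <;> simp
      rw [huniv, Finset.sum_pair (by decide : TV.v ≠ TV.w)]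
      simp only [map_add, map_one, Fmap_vv, Fmap_vw]
      abel

/-- The forward algebra map `LPA → Jacobson`. -/
noncomputable def F : LPA K ts tr →ₐ[K] JacobsonAlgebra K :=
  RingQuot.liftAlgHom K ⟨Fmap K, Frel K⟩

@[simp] lemma F_mk (a : FreeAlgebra K (LPAGen TV TE)) :
    F K (RingQuot.mkAlgHom K (LPARel K ts tr) a) = Fmap K a :=
  RingQuot.liftAlgHom_mkAlgHom_apply K (Fmap K) (Frel K) a

-- Abbreviations for generators of the LPA of the Toeplitz graph.
noncomputable def Vv : LPA K ts tr := vertexEl K ts tr TV.v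
noncomputable def Vw : LPA K ts tr := vertexEl K ts tr TV.w
noncomputable def Ee : LPA K ts tr := edgeEl K ts tr TE.e
noncomputable def Ef : LPA K ts tr := edgeEl K ts tr TE.f
noncomputable def Ge : LPA K ts tr := ghostEl K ts tr TE.e
noncomputable def Gf : LPA K ts tr := ghostEl K ts tr TE.f

lemma lrel {a b : FreeAlgebra K (LPAGen TV TE)} (h : LPARel K ts tr a b) :
    RingQuot.mkAlgHom K (LPARel K ts tr) a = RingQuot.mkAlgHom K (LPARel K ts tr) b :=
  RingQuot.mkAlgHom_rel K h

lemma l_vw : Vv K * Vw K = 0 := by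
  have := lrel K (LPARel.vertex_ne (K := K) (s := ts) (r := tr) (by decide : TV.v ≠ TV.w))
  rw [map_mul, map_zero] at this
  exact this

lemma l_wv : Vw K * Vv K = 0 := by
  have := lrel K (LPARel.vertex_ne (K := K) (s := ts) (r := tr) (by decide : TV.w ≠ TV.v))
  rw [map_mul, map_zero] at this
  exact this

lemma l_unit : Vv K + Vw K = 1 := by
  have := lrel K (LPARel.unit (K := K) (s := ts) (r := tr))
  rw [map_one] at this
  have huniv : (Finset.univ : Finset TV) = ({TV.v, TV.w} : Finset TV) := by
    ext a; cases a <;> simp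
  rw [huniv, Finset.sum_pair (by decide : TV.v ≠ TV.w), map_add] at this
  exact this

lemma l_eGe : Ge K * Ee K = Vv K := by
  have := lrel K (LPARel.ck1_self (K := K) (s := ts) (r := tr) TE.e)
  rw [map_mul] at this; exact this

lemma l_fGf : Gf K * Ef K = Vw K := by
  have := lrel K (LPARel.ck1_self (K := K) (s := ts) (r := tr) TE.f)
  rw [map_mul] at this; exact this

lemma l_eGf : Ge K * Ef K = 0 := by
  have := lrel K (LPARel.ck1_ne (K := K) (s := ts) (r := tr) (by decide : TE.e ≠ TE.f))
  rw [map_mul, map_zero] at this; exact this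

lemma l_fGe : Gf K * Ee K = 0 := by
  have := lrel K (LPARel.ck1_ne (K := K) (s := ts) (r := tr) (by decide : TE.f ≠ TE.e))
  rw [map_mul, map_zero] at this; exact this

lemma l_ck2 : Vv K = Ee K * Ge K + Ef K * Gf K := by
  have hfin : ({e : TE | ts e = TV.v}).Finite := Set.toFinite _
  have hne : ({e : TE | ts e = TV.v}).Nonempty := ⟨TE.e, rfl⟩
  have := lrel K (LPARel.ck2 (K := K) (s := ts) (r := tr) TV.v hfin hne)
  have hfs : hfin.toFinset = ({TE.e, TE.f} : Finset TE) := by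
    ext a; cases a <;> simp [ts]
  rw [hfs, Finset.sum_pair (by decide : TE.e ≠ TE.f), map_add, map_mul, map_mul] at this
  exact this

lemma l_EeV : Ee K * Vv K = Ee K := by
  have := lrel K (LPARel.edge_right (K := K) (s := ts) (r := tr) TE.e)
  rw [map_mul] at this; exact this

lemma l_EfW : Ef K * Vw K = Ef K := by
  have := lrel K (LPARel.edge_right (K := K) (s := ts) (r := tr) TE.f)
  rw [map_mul] at this; exact this

lemma l_VGe : Vv K * Ge K = Ge K := by
  have := lrel K (LPARel.ghost_left (K := K) (s := ts) (r := tr) TE.e)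
  rw [map_mul] at this; exact this

lemma l_WGf : Vw K * Gf K = Gf K := by
  have := lrel K (LPARel.ghost_left (K := K) (s := ts) (r := tr) TE.f)
  rw [map_mul] at this; exact this

lemma l_EfV : Ef K * Vv K = 0 := by
  rw [← l_EfW, mul_assoc, l_wv, mul_zero]

lemma l_VGf : Vv K * Gf K = 0 := by
  rw [← l_WGf, ← mul_assoc, l_vw, zero_mul]

lemma l_EeGf : Ee K * Gf K = 0 := by
  rw [← l_EeV, mul_assoc, l_VGf, mul_zero]

lemma l_EfGe : Ef K * Ge K = 0 := by
  rw [← l_VGe, ← mul_assoc, l_EfV, zero_mul]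

/-- The map on free-algebra generators defining the inverse `ψ`. -/
noncomputable def Gmap : FreeAlgebra K JGen →ₐ[K] LPA K ts tr :=
  FreeAlgebra.lift K fun g => match g with
    | .x => Ge K + Gf K
    | .y => Ee K + Ef K

@[simp] lemma Gmap_x : Gmap K (FreeAlgebra.ι K JGen.x) = Ge K + Gf K := by simp [Gmap]
@[simp] lemma Gmap_y : Gmap K (FreeAlgebra.ι K JGen.y) = Ee K + Ef K := by simp [Gmap]

lemma Grel : ∀ ⦃a b⦄, JRel K a b → Gmap K a = Gmap K b := by
  intro a b h
  cases h
  rw [map_mul, map_one, Gmap_x, Gmap_y]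
  rw [add_mul, mul_add, mul_add, l_eGe, l_eGf, l_fGe, l_fGf, add_zero, zero_add, l_unit]

/-- The inverse algebra map `Jacobson → LPA`. -/
noncomputable def G : JacobsonAlgebra K →ₐ[K] LPA K ts tr :=
  RingQuot.liftAlgHom K ⟨Gmap K, Grel K⟩

@[simp] lemma G_mk (a : FreeAlgebra K JGen) :
    G K (RingQuot.mkAlgHom K (JRel K) a) = Gmap K a :=
  RingQuot.liftAlgHom_mkAlgHom_apply K (Gmap K) (Grel K) a

@[simp] lemma G_jX : G K (jX K) = Ge K + Gf K := by rw [jX, G_mk, Gmap_x]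
@[simp] lemma G_jY : G K (jY K) = Ee K + Ef K := by rw [jY, G_mk, Gmap_y]

lemma G_YX : G K (jY K * jX K) = Vv K := by
  rw [map_mul, G_jX, G_jY, add_mul, mul_add, mul_add, l_EeGf, l_EfGe, add_zero, zero_add,
    ← l_ck2]

@[simp] lemma F_Vv : F K (Vv K) = jY K * jX K := by rw [Vv, vertexEl, gen, F_mk, Fmap_vv]
@[simp] lemma F_Vw : F K (Vw K) = 1 - jY K * jX K := by rw [Vw, vertexEl, gen, F_mk, Fmap_vw]
@[simp] lemma F_Ee : F K (Ee K) = jY K * jY K * jX K := by rw [Ee, edgeEl, gen, F_mk, Fmap_ee]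
@[simp] lemma F_Ef : F K (Ef K) = jY K - jY K * jY K * jX K := by
  rw [Ef, edgeEl, gen, F_mk, Fmap_ef]
@[simp] lemma F_Ge : F K (Ge K) = jY K * jX K * jX K := by rw [Ge, ghostEl, gen, F_mk, Fmap_ge]
@[simp] lemma F_Gf : F K (Gf K) = jX K - jY K * jX K * jX K := by
  rw [Gf, ghostEl, gen, F_mk, Fmap_gf]

lemma hFG : (F K).comp (G K) = AlgHom.id K (JacobsonAlgebra K) := by
  apply RingQuot.ringQuot_ext'
  apply FreeAlgebra.hom_ext
  funext g
  simp only [Function.comp_apply, AlgHom.coe_comp, AlgHom.coe_id, id_eq]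
  cases g
  · show F K (G K (jX K)) = jX K
    rw [G_jX, map_add, F_Ge, F_Gf]; abel
  · show F K (G K (jY K)) = jY K
    rw [G_jY, map_add, F_Ee, F_Ef]; abel

lemma G_YYX : G K (jY K * jY K * jX K) = Ee K := by
  rw [mul_assoc, map_mul, G_jY, G_YX, add_mul, l_EeV, l_EfV, add_zero]

lemma G_YXX : G K (jY K * jX K * jX K) = Ge K := by
  rw [map_mul, G_YX, G_jX, mul_add, l_VGe, l_VGf, add_zero]

lemma hGF : (G K).comp (F K) = AlgHom.id K (LPA K ts tr) := by
  apply RingQuot.ringQuot_ext'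
  apply FreeAlgebra.hom_ext
  funext g
  simp only [Function.comp_apply, AlgHom.coe_comp, AlgHom.coe_id, id_eq]
  cases g with
  | vertex v =>
      cases v
      · show G K (F K (Vv K)) = Vv K
        rw [F_Vv, G_YX]
      · show G K (F K (Vw K)) = Vw K
        rw [F_Vw, map_sub, map_one, G_YX, eq_comm, eq_sub_iff_add_eq, add_comm]
        exact l_unit K
  | edge e =>
      cases e
      · show G K (F K (Ee K)) = Ee K
        rw [F_Ee, G_YYX]
      · show G K (F K (Ef K)) = Ef K
        rw [F_Ef, map_sub, G_jY, G_YYX]; abel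
  | ghost e =>
      cases e
      · show G K (F K (Ge K)) = Ge K
        rw [F_Ge, G_YXX]
      · show G K (F K (Gf K)) = Gf K
        rw [F_Gf, map_sub, G_jX, G_YXX]; abel

end ToeplitzAux

/-- The Leavitt path algebra of the Toeplitz graph `T` is isomorphic to the Jacobson
algebra `A = K⟨x, y | xy = 1⟩`, via `v ↦ yx`, `w ↦ 1 - yx`, `e ↦ y²x`, `f ↦ y - y²x`,
`e* ↦ yx²`, `f* ↦ x - yx²`. -/
theorem lpa_toeplitz_iso_jacobson (K : Type) [Field K] :
    ∃ φ : LPA K ts tr ≃ₐ[K] JacobsonAlgebra K,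
      φ (vertexEl K ts tr TV.v) = jY K * jX K ∧
      φ (vertexEl K ts tr TV.w) = 1 - jY K * jX K ∧
      φ (edgeEl K ts tr TE.e) = jY K * jY K * jX K ∧
      φ (edgeEl K ts tr TE.f) = jY K - jY K * jY K * jX K ∧
      φ (ghostEl K ts tr TE.e) = jY K * jX K * jX K ∧
      φ (ghostEl K ts tr TE.f) = jX K - jY K * jX K * jX K := by
  exact ⟨AlgEquiv.ofAlgHom (ToeplitzAux.F K) (ToeplitzAux.G K) (ToeplitzAux.hFG K)
      (ToeplitzAux.hGF K),
    ToeplitzAux.F_Vv K, ToeplitzAux.F_Vw K, ToeplitzAux.F_Ee K, ToeplitzAux.F_Ef K,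
    ToeplitzAux.F_Ge K, ToeplitzAux.F_Gf K⟩
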